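/- Let (T, μ) be a finite measure space, g : T → ℝ an integrable function, and m : T → ℝ^p a measurable map with t ↦ ‖m(t)‖² integrable. Let Σ_x be a symmetric positive definite p×p real matrix, and define Σ_xy := ∫_T m(t) m(t)ᵀ dμ(t) (a Bochner integral in the space of p×p real matrices). If w₀ ∈ ℝ^p, w₀ ≠ 0, minimizes the function w ↦ ∫_T ( g(t) − (⟨m(t), w⟩)² / (wᵀ Σ_x w) ) dμ(t) over all nonzero w ∈ ℝ^p, then w₀ maximizes the generalized Rayleigh quotient w ↦ (wᵀ Σ_xy w) / (wᵀ Σ_x w) over all nonzero w ∈ ℝ^p. -/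

import Mathlib

open MeasureTheory Matrix

/-- Proposition 1, deterministic form: if `w₀ ≠ 0` minimizes the
integrated residual sum of squares
`w ↦ ∫_T (g(t) − ⟨m(t),w⟩²/(wᵀΣ_x w)) dμ(t)` over nonzero `w`, then `w₀`
maximizes the generalized Rayleigh quotient `w ↦ (wᵀ Σ_xy w)/(wᵀ Σ_x w)` over
nonzero `w`, where `Σ_xy = ∫_T m(t) m(t)ᵀ dμ(t)` (entrywise Bochner integral). -/
theorem stmt2
    {T : Type*} [MeasurableSpace T] (μ : Measure T) [IsFiniteMeasure μ]
    (p : ℕ) (g : T → ℝ) (hg : Integrable g μ)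
    (m : T → (Fin p → ℝ)) (hm : Measurable m)
    (hm2 : Integrable (fun t => ∑ i, (m t i) ^ 2) μ)
    (Sx : Matrix (Fin p) (Fin p) ℝ) (hSx : Sx.PosDef)
    (Sxy : Matrix (Fin p) (Fin p) ℝ)
    (hSxy : Sxy = fun i j => ∫ t, m t i * m t j ∂μ)
    (w₀ : Fin p → ℝ) (hw₀ : w₀ ≠ 0)
    (hmin : ∀ w : Fin p → ℝ, w ≠ 0 →
      (∫ t, (g t - (m t ⬝ᵥ w₀) ^ 2 / (w₀ ⬝ᵥ Sx *ᵥ w₀)) ∂μ)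
        ≤ ∫ t, (g t - (m t ⬝ᵥ w) ^ 2 / (w ⬝ᵥ Sx *ᵥ w)) ∂μ) :
    ∀ w : Fin p → ℝ, w ≠ 0 →
      (w ⬝ᵥ Sxy *ᵥ w) / (w ⬝ᵥ Sx *ᵥ w) ≤ (w₀ ⬝ᵥ Sxy *ᵥ w₀) / (w₀ ⬝ᵥ Sx *ᵥ w₀) := by
  classical
  -- integrability of entrywise products
  have hmi : ∀ i j : Fin p, Integrable (fun t => m t i * m t j) μ := by
    intro i j
    refine hm2.mono' ?_ ?_
    · exact (((hm.eval).mul (hm.eval))).aestronglyMeasurable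
    · refine Filter.Eventually.of_forall fun t => ?_
      have hi : (m t i) ^ 2 ≤ ∑ k, (m t k) ^ 2 :=
        Finset.single_le_sum (f := fun k => (m t k) ^ 2) (fun k _ => sq_nonneg _) (Finset.mem_univ i)
      have hj : (m t j) ^ 2 ≤ ∑ k, (m t k) ^ 2 :=
        Finset.single_le_sum (f := fun k => (m t k) ^ 2) (fun k _ => sq_nonneg _) (Finset.mem_univ j)
      have habs : |m t i * m t j| ≤ ((m t i) ^ 2 + (m t j) ^ 2) / 2 := by
        rw [abs_mul]
        nlinarith [abs_nonneg (m t i), abs_nonneg (m t j), sq_abs (m t i), sq_abs (m t j),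
          sq_nonneg (|m t i| - |m t j|)]
      have hnn : (0:ℝ) ≤ ∑ k, (m t k) ^ 2 := Finset.sum_nonneg fun k _ => sq_nonneg _
      calc ‖m t i * m t j‖ = |m t i * m t j| := rfl
        _ ≤ ((m t i) ^ 2 + (m t j) ^ 2) / 2 := habs
        _ ≤ ∑ k, (m t k) ^ 2 := by linarith
  have expand : ∀ (v : Fin p → ℝ) t,
      (m t ⬝ᵥ v) ^ 2 = ∑ i, ∑ j, v i * v j * (m t i * m t j) := by
    intro v t
    rw [dotProduct, sq, Finset.sum_mul_sum]
    exact Finset.sum_congr rfl fun i _ => Finset.sum_congr rfl fun j _ => by ring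
  have hintsq : ∀ v : Fin p → ℝ, Integrable (fun t => (m t ⬝ᵥ v) ^ 2) μ := by
    intro v
    have : Integrable (fun t => ∑ i, ∑ j, v i * v j * (m t i * m t j)) μ := by
      refine integrable_finset_sum _ fun i _ => integrable_finset_sum _ fun j _ => ?_
      exact (hmi i j).const_mul _
    exact this.congr (Filter.Eventually.of_forall fun t => (expand v t).symm)
  have key : ∀ v : Fin p → ℝ, (∫ t, (m t ⬝ᵥ v) ^ 2 ∂μ) = v ⬝ᵥ Sxy *ᵥ v := by
    intro v
    have h1 : (∫ t, (m t ⬝ᵥ v) ^ 2 ∂μ)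
        = ∫ t, ∑ i, ∑ j, v i * v j * (m t i * m t j) ∂μ := by
      exact integral_congr_ae (Filter.Eventually.of_forall fun t => expand v t)
    rw [h1, integral_finset_sum _ (fun i _ =>
      integrable_finset_sum _ fun j _ => (hmi i j).const_mul _)]
    have h2 : ∀ i : Fin p, (∫ t, ∑ j, v i * v j * (m t i * m t j) ∂μ)
        = ∑ j, v i * v j * ∫ t, m t i * m t j ∂μ := by
      intro i
      rw [integral_finset_sum _ (fun j _ => (hmi i j).const_mul _)]
      exact Finset.sum_congr rfl fun j _ => integral_const_mul _ _
    simp only [h2]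
    rw [hSxy]
    simp only [dotProduct, Matrix.mulVec, dotProduct, Finset.mul_sum]
    exact Finset.sum_congr rfl fun i _ => Finset.sum_congr rfl fun j _ => by
      ring
  have hpos : ∀ v : Fin p → ℝ, v ≠ 0 → 0 < v ⬝ᵥ Sx *ᵥ v := by
    intro v hv
    have := hSx.dotProduct_mulVec_pos hv
    simpa using this
  have hsplit : ∀ v : Fin p → ℝ,
      (∫ t, (g t - (m t ⬝ᵥ v) ^ 2 / (v ⬝ᵥ Sx *ᵥ v)) ∂μ)
      = (∫ t, g t ∂μ) - (v ⬝ᵥ Sxy *ᵥ v) / (v ⬝ᵥ Sx *ᵥ v) := by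
    intro v
    rw [integral_sub hg ((hintsq v).div_const _), integral_div, key v]
  intro w hw
  have h := hmin w hw
  rw [hsplit w, hsplit w₀] at h
  linarith
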